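/- (Example of a generic null curve with constant curvatures.) Equip ℝ⁵ with the bilinear form ⟨X,Y⟩ = −X⁰Y⁰ − X¹Y¹ + X²Y² + X³Y³ + X⁴Y⁴. Let m, n be integers with 0 < m < n and r ∈ (0,1), and define W : ℝ → ℝ⁵ by W(s) = (m cos(ns), m sin(ns), n cos(ms), n sin(ms), nr/√(1−r²)). Then ⟨W,W⟩ equals the positive constant (n² − m²) + n²r²/(1−r²), ⟨W,W′⟩ ≡ 0, ⟨W′,W′⟩ ≡ 0, and ⟨W″,W″⟩ equals the negative constant m²n²(m² − n²). Consequently Γ := W/√⟨W,W⟩ satisfies ⟨Γ,Γ⟩ ≡ 1, ⟨Γ′,Γ′⟩ ≡ 0, and ⟨Γ″,Γ″⟩ is a negative constant; i.e. Γ is a generic null curve in the hyperquadric S^{2,2} = {V ∈ ℝ⁵ : ⟨V,V⟩ = 1}. -/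

import Mathlib

/-- The signature `(2,3)` bilinear form in pseudo-orthogonal coordinates:
`⟨X,Y⟩ = −X⁰Y⁰ − X¹Y¹ + X²Y² + X³Y³ + X⁴Y⁴`. -/
noncomputable def ipPO (X Y : Fin 5 → ℝ) : ℝ :=
  -(X 0 * Y 0) - X 1 * Y 1 + X 2 * Y 2 + X 3 * Y 3 + X 4 * Y 4

/-- The curve `W(s) = (m cos ns, m sin ns, n cos ms, n sin ms, nr/√(1−r²))`. -/
noncomputable def Wcurve (m n : ℤ) (r : ℝ) (s : ℝ) : Fin 5 → ℝ :=
  ![(m : ℝ) * Real.cos (n * s), (m : ℝ) * Real.sin (n * s),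
    (n : ℝ) * Real.cos (m * s), (n : ℝ) * Real.sin (m * s),
    (n : ℝ) * r / Real.sqrt (1 - r ^ 2)]


noncomputable def Wd (m n : ℤ) (s : ℝ) : Fin 5 → ℝ :=
  ![-((m : ℝ) * n) * Real.sin (n * s), ((m : ℝ) * n) * Real.cos (n * s),
    -((m : ℝ) * n) * Real.sin (m * s), ((m : ℝ) * n) * Real.cos (m * s), 0]

noncomputable def Wdd (m n : ℤ) (s : ℝ) : Fin 5 → ℝ :=
  ![-((m : ℝ) * n ^ 2) * Real.cos (n * s), -((m : ℝ) * n ^ 2) * Real.sin (n * s),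
    -((m : ℝ) ^ 2 * n) * Real.cos (m * s), -((m : ℝ) ^ 2 * n) * Real.sin (m * s), 0]

lemma hW1 (m n : ℤ) (r s : ℝ) : HasDerivAt (Wcurve m n r) (Wd m n s) s := by
  rw [hasDerivAt_pi]
  intro i
  have hn : HasDerivAt (fun x : ℝ => (n : ℝ) * x) (n : ℝ) s := by
    simpa using (hasDerivAt_id s).const_mul (n : ℝ)
  have hm : HasDerivAt (fun x : ℝ => (m : ℝ) * x) (m : ℝ) s := by
    simpa using (hasDerivAt_id s).const_mul (m : ℝ)
  fin_cases i <;>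
    simp only [Wcurve, Wd, Matrix.cons_val_zero, Matrix.cons_val_one, Matrix.head_cons,
      Fin.isValue]
  · have := (hn.cos.const_mul (m : ℝ)); convert this using 1 <;> first | rfl | (simp <;> ring_nf)
  · have := (hn.sin.const_mul (m : ℝ)); convert this using 1 <;> first | rfl | (simp <;> ring_nf)
  · have := (hm.cos.const_mul (n : ℝ)); convert this using 1 <;> first | rfl | (simp <;> ring_nf)
  · have := (hm.sin.const_mul (n : ℝ)); convert this using 1 <;> first | rfl | (simp <;> ring_nf)
  · exact hasDerivAt_const _ _

lemma hW2 (m n : ℤ) (s : ℝ) : HasDerivAt (Wd m n) (Wdd m n s) s := by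
  rw [hasDerivAt_pi]
  intro i
  have hn : HasDerivAt (fun x : ℝ => (n : ℝ) * x) (n : ℝ) s := by
    simpa using (hasDerivAt_id s).const_mul (n : ℝ)
  have hm : HasDerivAt (fun x : ℝ => (m : ℝ) * x) (m : ℝ) s := by
    simpa using (hasDerivAt_id s).const_mul (m : ℝ)
  fin_cases i <;>
    simp only [Wd, Wdd, Matrix.cons_val_zero, Matrix.cons_val_one, Matrix.head_cons,
      Fin.isValue]
  · have := (hn.sin.const_mul (-((m : ℝ) * n))); convert this using 1 <;> first | rfl | (simp <;> ring_nf)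
  · have := (hn.cos.const_mul ((m : ℝ) * n)); convert this using 1 <;> first | rfl | (simp <;> ring_nf)
  · have := (hm.sin.const_mul (-((m : ℝ) * n))); convert this using 1 <;> first | rfl | (simp <;> ring_nf)
  · have := (hm.cos.const_mul ((m : ℝ) * n)); convert this using 1 <;> first | rfl | (simp <;> ring_nf)
  · exact hasDerivAt_const _ _

lemma derivW (m n : ℤ) (r : ℝ) : deriv (Wcurve m n r) = Wd m n :=
  funext fun s => (hW1 m n r s).deriv

lemma derivW2 (m n : ℤ) (r : ℝ) : deriv (deriv (Wcurve m n r)) = Wdd m n := by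
  rw [derivW]; exact funext fun s => (hW2 m n s).deriv

lemma ipPO_smul (a : ℝ) (X Y : Fin 5 → ℝ) : ipPO (a • X) (a • Y) = a ^ 2 * ipPO X Y := by
  simp only [ipPO, Pi.smul_apply, smul_eq_mul]; ring

/-- example of a generic null curve with constant curvatures:
`⟨W,W⟩ = (n²−m²) + n²r²/(1−r²) > 0`, `⟨W,W′⟩ = ⟨W′,W′⟩ = 0`,
`⟨W″,W″⟩ = m²n²(m²−n²) < 0`; hence `Γ = W/√⟨W,W⟩` satisfies `⟨Γ,Γ⟩ = 1`,
`⟨Γ′,Γ′⟩ = 0` and `⟨Γ″,Γ″⟩` is a negative constant, i.e. `Γ` is a generic null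
curve in `S^{2,2}`. -/
theorem stmt13 (m n : ℤ) (hm : 0 < m) (hmn : m < n) (r : ℝ) (hr : r ∈ Set.Ioo (0 : ℝ) 1) :
    (∀ s : ℝ, ipPO (Wcurve m n r s) (Wcurve m n r s) =
      ((n : ℝ) ^ 2 - (m : ℝ) ^ 2) + (n : ℝ) ^ 2 * r ^ 2 / (1 - r ^ 2)) ∧
    (0 : ℝ) < ((n : ℝ) ^ 2 - (m : ℝ) ^ 2) + (n : ℝ) ^ 2 * r ^ 2 / (1 - r ^ 2) ∧
    (∀ s : ℝ, ipPO (Wcurve m n r s) (deriv (Wcurve m n r) s) = 0) ∧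
    (∀ s : ℝ, ipPO (deriv (Wcurve m n r) s) (deriv (Wcurve m n r) s) = 0) ∧
    (∀ s : ℝ, ipPO (deriv (deriv (Wcurve m n r)) s) (deriv (deriv (Wcurve m n r)) s) =
      (m : ℝ) ^ 2 * (n : ℝ) ^ 2 * ((m : ℝ) ^ 2 - (n : ℝ) ^ 2)) ∧
    (m : ℝ) ^ 2 * (n : ℝ) ^ 2 * ((m : ℝ) ^ 2 - (n : ℝ) ^ 2) < 0 ∧
    (∀ s : ℝ,
      ipPO ((fun t => (Real.sqrt (ipPO (Wcurve m n r t) (Wcurve m n r t)))⁻¹ • Wcurve m n r t) s)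
        ((fun t => (Real.sqrt (ipPO (Wcurve m n r t) (Wcurve m n r t)))⁻¹ • Wcurve m n r t) s) = 1) ∧
    (∀ s : ℝ,
      ipPO (deriv (fun t => (Real.sqrt (ipPO (Wcurve m n r t) (Wcurve m n r t)))⁻¹ • Wcurve m n r t) s)
        (deriv (fun t => (Real.sqrt (ipPO (Wcurve m n r t) (Wcurve m n r t)))⁻¹ • Wcurve m n r t) s) = 0) ∧
    (∃ k : ℝ, k < 0 ∧ ∀ s : ℝ,
      ipPO (deriv (deriv (fun t => (Real.sqrt (ipPO (Wcurve m n r t) (Wcurve m n r t)))⁻¹ • Wcurve m n r t)) s)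
        (deriv (deriv (fun t => (Real.sqrt (ipPO (Wcurve m n r t) (Wcurve m n r t)))⁻¹ • Wcurve m n r t)) s) = k) := by
  obtain ⟨hr0, hr1⟩ := hr
  have hmR : (0 : ℝ) < (m : ℝ) := by exact_mod_cast hm
  have hnR : (m : ℝ) < (n : ℝ) := by exact_mod_cast hmn
  have hnpos : (0 : ℝ) < (n : ℝ) := lt_trans hmR hnR
  have h1r : (0 : ℝ) < 1 - r ^ 2 := by nlinarith
  have hsq : Real.sqrt (1 - r ^ 2) ^ 2 = 1 - r ^ 2 := Real.sq_sqrt h1r.le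
  have hsqpos : 0 < Real.sqrt (1 - r ^ 2) := Real.sqrt_pos.mpr h1r
  set C : ℝ := ((n : ℝ) ^ 2 - (m : ℝ) ^ 2) + (n : ℝ) ^ 2 * r ^ 2 / (1 - r ^ 2) with hCdef
  have hC : 0 < C := by
    have h1 : (0 : ℝ) < (n : ℝ) ^ 2 - (m : ℝ) ^ 2 := by nlinarith
    have h2 : (0 : ℝ) < (n : ℝ) ^ 2 * r ^ 2 / (1 - r ^ 2) := by positivity
    rw [hCdef]; linarith
  have key1 : ∀ s : ℝ, ipPO (Wcurve m n r s) (Wcurve m n r s) = C := by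
    intro s
    have hc1 := Real.sin_sq_add_cos_sq ((n : ℝ) * s)
    have hc2 := Real.sin_sq_add_cos_sq ((m : ℝ) * s)
    simp only [ipPO, Wcurve, Matrix.cons_val_zero, Matrix.cons_val_one, Matrix.head_cons,
      Matrix.cons_val_two, Matrix.cons_val_three, Matrix.cons_val_four, Matrix.tail_cons]
    rw [hCdef]
    have h5 : (n : ℝ) * r / Real.sqrt (1 - r ^ 2) * ((n : ℝ) * r / Real.sqrt (1 - r ^ 2))
        = (n : ℝ) ^ 2 * r ^ 2 / (1 - r ^ 2) := by
      rw [div_mul_div_comm, Real.mul_self_sqrt h1r.le]; ring_nf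
    rw [h5]
    linear_combination (-(m : ℝ) ^ 2) * hc1 + (n : ℝ) ^ 2 * hc2
  have key3 : ∀ s : ℝ, ipPO (Wcurve m n r s) (deriv (Wcurve m n r) s) = 0 := by
    intro s
    rw [derivW]
    simp only [ipPO, Wcurve, Wd, Matrix.cons_val_zero, Matrix.cons_val_one, Matrix.head_cons,
      Matrix.cons_val_two, Matrix.cons_val_three, Matrix.cons_val_four, Matrix.tail_cons]
    ring
  have key4 : ∀ s : ℝ, ipPO (deriv (Wcurve m n r) s) (deriv (Wcurve m n r) s) = 0 := by
    intro s
    rw [derivW]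
    have hc1 := Real.sin_sq_add_cos_sq ((n : ℝ) * s)
    have hc2 := Real.sin_sq_add_cos_sq ((m : ℝ) * s)
    simp only [ipPO, Wd, Matrix.cons_val_zero, Matrix.cons_val_one, Matrix.head_cons,
      Matrix.cons_val_two, Matrix.cons_val_three, Matrix.cons_val_four, Matrix.tail_cons]
    linear_combination (-(m : ℝ) ^ 2 * (n : ℝ) ^ 2) * hc1 + (m : ℝ) ^ 2 * (n : ℝ) ^ 2 * hc2
  have key5 : ∀ s : ℝ, ipPO (deriv (deriv (Wcurve m n r)) s) (deriv (deriv (Wcurve m n r)) s) =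
      (m : ℝ) ^ 2 * (n : ℝ) ^ 2 * ((m : ℝ) ^ 2 - (n : ℝ) ^ 2) := by
    intro s
    rw [derivW2]
    have hc1 := Real.sin_sq_add_cos_sq ((n : ℝ) * s)
    have hc2 := Real.sin_sq_add_cos_sq ((m : ℝ) * s)
    simp only [ipPO, Wdd, Matrix.cons_val_zero, Matrix.cons_val_one, Matrix.head_cons,
      Matrix.cons_val_two, Matrix.cons_val_three, Matrix.cons_val_four, Matrix.tail_cons]
    linear_combination (-(m : ℝ) ^ 2 * (n : ℝ) ^ 4) * hc1 + (m : ℝ) ^ 4 * (n : ℝ) ^ 2 * hc2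
  have key6 : (m : ℝ) ^ 2 * (n : ℝ) ^ 2 * ((m : ℝ) ^ 2 - (n : ℝ) ^ 2) < 0 := by
    have hlt : (m : ℝ) ^ 2 - (n : ℝ) ^ 2 < 0 := by nlinarith
    exact mul_neg_of_pos_of_neg (by positivity) hlt
  -- Gamma
  have hGeq : (fun t => (Real.sqrt (ipPO (Wcurve m n r t) (Wcurve m n r t)))⁻¹ • Wcurve m n r t)
      = fun t => (Real.sqrt C)⁻¹ • Wcurve m n r t := by
    funext t; rw [key1 t]
  set a : ℝ := (Real.sqrt C)⁻¹ with ha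
  have haC : a ^ 2 * C = 1 := by
    rw [ha, inv_pow, Real.sq_sqrt hC.le]
    exact inv_mul_cancel₀ hC.ne'
  have ha2pos : 0 < a ^ 2 := by positivity
  have hGd : deriv (fun t => a • Wcurve m n r t) = fun s => a • Wd m n s := by
    funext s; exact (HasDerivAt.const_smul a (hW1 m n r s)).deriv
  have hGdd : deriv (deriv (fun t => a • Wcurve m n r t)) = fun s => a • Wdd m n s := by
    rw [hGd]; funext s; exact (HasDerivAt.const_smul a (hW2 m n s)).deriv
  refine ⟨key1, hC, key3, key4, key5, key6, ?_, ?_, ?_⟩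
  · intro s
    rw [hGeq]
    simp only [ipPO_smul, key1 s, haC]
  · intro s
    rw [hGeq, hGd]
    have : ipPO (a • Wd m n s) (a • Wd m n s) = a ^ 2 * ipPO (Wd m n s) (Wd m n s) :=
      ipPO_smul a _ _
    rw [this]
    have h0 : ipPO (Wd m n s) (Wd m n s) = 0 := by rw [← derivW m n r]; exact key4 s
    rw [h0, mul_zero]
  · refine ⟨a ^ 2 * ((m : ℝ) ^ 2 * (n : ℝ) ^ 2 * ((m : ℝ) ^ 2 - (n : ℝ) ^ 2)), ?_, ?_⟩
    · exact mul_neg_of_pos_of_neg ha2pos key6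
    · intro s
      rw [hGeq, hGdd]
      have : ipPO (a • Wdd m n s) (a • Wdd m n s) = a ^ 2 * ipPO (Wdd m n s) (Wdd m n s) :=
        ipPO_smul a _ _
      rw [this]
      have h0 : ipPO (Wdd m n s) (Wdd m n s)
          = (m : ℝ) ^ 2 * (n : ℝ) ^ 2 * ((m : ℝ) ^ 2 - (n : ℝ) ^ 2) := by
        rw [← derivW2 m n r]; exact key5 s
      rw [h0]
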